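/- Let H = kG be the group Hopf algebra of a group G, and let A be a G-graded algebra with its canonical kG-comodule algebra structure δ(a) = a ⊗ g for a ∈ A_g. Then the extension A_e = A^{co H} ⊆ A is Hopf-Galois (i.e. the canonical map A ⊗_{A_e} A → A ⊗ H, a ⊗ b ↦ (a ⊗ 1)δ(b), is bijective) if and only if A is strongly G-graded. -/

import Mathlib

open TensorProduct

section

variable (k R G : Type*) [Field k] [Ring R] [Algebra k R] [Group G] [DecidableEq G]
variable (A : G → Submodule k R) [DirectSum.Decomposition A]

/-- The canonical `kG`-coaction on a `G`-graded algebra: `δ(a) = a ⊗ g` for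
`a ∈ A_g`, extended linearly, with values in `A ⊗ kG`
(here `kG = MonoidAlgebra k G` is the group Hopf algebra). -/
noncomputable def coactionKG : R →ₗ[k] R ⊗[k] MonoidAlgebra k G :=
  (DirectSum.toModule k G (R ⊗[k] MonoidAlgebra k G) fun g =>
      ((TensorProduct.mk k R (MonoidAlgebra k G)).flip
        (MonoidAlgebra.single g 1)) ∘ₗ (A g).subtype) ∘ₗ
    (DirectSum.decomposeLinearEquiv A).toLinearMap

/-- The canonical (Hopf–Galois) map `A ⊗ A → A ⊗ kG`, `a ⊗ b ↦ (a ⊗ 1)·δ(b)`,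
as a `k`-linear map on `A ⊗_k A`. -/
noncomputable def canonicalMapKG : R ⊗[k] R →ₗ[k] R ⊗[k] MonoidAlgebra k G :=
  TensorProduct.lift
    (((LinearMap.mul k (R ⊗[k] MonoidAlgebra k G)).comp
        (Algebra.TensorProduct.includeLeft (R := k) (S := k)).toLinearMap).compl₂
      (coactionKG k R G A))

namespace HGaux

variable {k R G}
set_option linter.unusedSectionVars false

/-- The coaction on a homogeneous element. -/
theorem coaction_of_mem {r : R} {g : G} (hr : r ∈ A g) :
    coactionKG k R G A r = r ⊗ₜ[k] MonoidAlgebra.single g 1 := by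
  unfold coactionKG
  simp only [LinearMap.coe_comp, Function.comp_apply, LinearEquiv.coe_coe,
    DirectSum.decomposeLinearEquiv_apply,
    DirectSum.decompose_of_mem A hr, ← DirectSum.lof_eq_of k, DirectSum.toModule_lof]
  rfl

theorem canon_tmul (a b : R) :
    canonicalMapKG k R G A (a ⊗ₜ[k] b) =
      (a ⊗ₜ[k] (1 : MonoidAlgebra k G)) * coactionKG k R G A b := rfl

theorem canon_tmul_of_mem {b : R} {h : G} (hb : b ∈ A h) (a : R) :
    canonicalMapKG k R G A (a ⊗ₜ[k] b) = (a * b) ⊗ₜ[k] MonoidAlgebra.single h 1 := by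
  rw [canon_tmul, coaction_of_mem A hb, Algebra.TensorProduct.tmul_mul_tmul, one_mul]

/-- The grading projection as a linear map. -/
noncomputable def projA (g : G) : R →ₗ[k] R :=
  (A g).subtype ∘ₗ DirectSum.component k G (fun i => A i) g ∘ₗ
    (DirectSum.decomposeLinearEquiv A).toLinearMap

theorem projA_apply (g : G) (r : R) :
    projA A g r = (DirectSum.decompose A r g : R) := rfl

variable (hA : ∀ g h : G, A g * A h ≤ A (g * h))

include hA

theorem one_mem_one : (1 : R) ∈ A 1 := by
  classical
  have hhom : ∀ (g : G) (a : R), a ∈ A g →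
      a * (DirectSum.decompose A (1 : R) 1 : R) = a := by
    intro g a ha
    have h2 : a = ∑ h ∈ (DirectSum.decompose A (1 : R)).support,
        a * (DirectSum.decompose A (1 : R) h : R) := by
      rw [← Finset.mul_sum, DirectSum.sum_support_decompose, mul_one]
    have h3 := congrArg (projA A g) h2
    rw [map_sum, projA_apply, DirectSum.decompose_of_mem_same A ha] at h3
    have h4 : ∀ h ∈ (DirectSum.decompose A (1 : R)).support,
        projA A g (a * (DirectSum.decompose A (1 : R) h : R)) =
          if h = 1 then a * (DirectSum.decompose A (1 : R) 1 : R) else 0 := by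
      intro h _
      have hmem : a * (DirectSum.decompose A (1 : R) h : R) ∈ A (g * h) :=
        hA g h (Submodule.mul_mem_mul ha (SetLike.coe_mem _))
      by_cases hh : h = 1
      · subst hh
        rw [if_pos rfl, projA_apply]
        rw [mul_one] at hmem
        exact DirectSum.decompose_of_mem_same A hmem
      · rw [if_neg hh, projA_apply]
        exact DirectSum.decompose_of_mem_ne A hmem
          (by simpa [mul_eq_left] using hh)
    rw [Finset.sum_congr rfl h4, Finset.sum_ite_eq' _ (1 : G)] at h3
    by_cases h1 : (1 : G) ∈ (DirectSum.decompose A (1 : R)).support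
    · rw [if_pos h1] at h3; exact h3.symm
    · have he : (DirectSum.decompose A (1 : R) 1 : R) = 0 := by
        rw [DFinsupp.notMem_support_iff.mp h1]; rfl
      rw [if_neg h1] at h3
      rw [he, mul_zero, h3]
  have key : ∀ r : R, r * (DirectSum.decompose A (1 : R) 1 : R) = r := by
    refine DirectSum.Decomposition.inductionOn A (zero_mul _) ?_ ?_
    · intro i m; exact hhom i m (SetLike.coe_mem m)
    · intro x y hx hy; rw [add_mul, hx, hy]
  have he1 : (DirectSum.decompose A (1 : R) 1 : R) = 1 := by
    have := key 1; rwa [one_mul] at this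
  rw [← he1]; exact SetLike.coe_mem _

theorem decompose_mul_of_right_mem {b : R} {g : G} (hb : b ∈ A g) (r : R) :
    (DirectSum.decompose A (r * b) 1 : R) =
      (DirectSum.decompose A r g⁻¹ : R) * b := by
  induction r using DirectSum.Decomposition.inductionOn A with
  | zero => simp
  | @homogeneous i m =>
    have hm : (m : R) * b ∈ A (i * g) :=
      hA i g (Submodule.mul_mem_mul (SetLike.coe_mem m) hb)
    by_cases hi : i = g⁻¹
    · subst hi
      rw [inv_mul_cancel] at hm
      rw [DirectSum.decompose_of_mem_same A hm,
        DirectSum.decompose_of_mem_same A (SetLike.coe_mem m)]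
    · rw [DirectSum.decompose_of_mem_ne A hm
        (fun h => hi (eq_inv_of_mul_eq_one_left h)),
        DirectSum.decompose_of_mem_ne A (SetLike.coe_mem m) hi, zero_mul]
  | add x y hx hy =>
    rw [add_mul, DirectSum.decompose_add, DirectSum.add_apply, Submodule.coe_add,
      hx, hy, DirectSum.decompose_add, DirectSum.add_apply, Submodule.coe_add, add_mul]

theorem span_le_ker :
    Submodule.span k {z : R ⊗[k] R |
        ∃ (a b : R), ∃ s ∈ A (1 : G), z = (a * s) ⊗ₜ[k] b - a ⊗ₜ[k] (s * b)} ≤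
      LinearMap.ker (canonicalMapKG k R G A) := by
  rw [Submodule.span_le]
  rintro z ⟨a, b, s, hs, rfl⟩
  simp only [SetLike.mem_coe, LinearMap.mem_ker, map_sub, sub_eq_zero]
  have key : ∀ b : R, canonicalMapKG k R G A ((a * s) ⊗ₜ[k] b) =
      canonicalMapKG k R G A (a ⊗ₜ[k] (s * b)) := by
    refine DirectSum.Decomposition.inductionOn A ?_ ?_ ?_
    · rw [TensorProduct.tmul_zero, mul_zero, TensorProduct.tmul_zero]
    · intro h m
      have hsm : s * (m : R) ∈ A h := by
        have := hA 1 h (Submodule.mul_mem_mul hs (SetLike.coe_mem m))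
        rwa [one_mul] at this
      rw [canon_tmul_of_mem A (SetLike.coe_mem m), canon_tmul_of_mem A hsm, mul_assoc]
    · intro x y hx hy
      rw [TensorProduct.tmul_add, mul_add, TensorProduct.tmul_add, map_add, map_add,
        hx, hy]
  exact key b

theorem exists_rep {p q : Submodule k R} {x : R} (hx : x ∈ p * q) :
    ∃ (n : ℕ) (c d : Fin n → R), (∀ i, c i ∈ p) ∧ (∀ i, d i ∈ q) ∧
      ∑ i, c i * d i = x := by
  refine Submodule.mul_induction_on hx ?_ ?_
  · intro m hm n hn
    exact ⟨1, fun _ => m, fun _ => n, fun _ => hm, fun _ => hn, by simp⟩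
  · rintro x y ⟨n₁, c₁, d₁, hc₁, hd₁, rfl⟩ ⟨n₂, c₂, d₂, hc₂, hd₂, rfl⟩
    refine ⟨n₁ + n₂, Fin.append c₁ c₂, Fin.append d₁ d₂, ?_, ?_, ?_⟩
    · intro i
      refine Fin.addCases (fun j => ?_) (fun j => ?_) i
      · rw [Fin.append_left]; exact hc₁ j
      · rw [Fin.append_right]; exact hc₂ j
    · intro i
      refine Fin.addCases (fun j => ?_) (fun j => ?_) i
      · rw [Fin.append_left]; exact hd₁ j
      · rw [Fin.append_right]; exact hd₂ j
    · rw [Fin.sum_univ_add]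
      simp [Fin.append_left, Fin.append_right]

theorem ker_le_span (hS : ∀ g h : G, A g * A h = A (g * h)) :
    LinearMap.ker (canonicalMapKG k R G A) ≤
      Submodule.span k {z : R ⊗[k] R |
        ∃ (a b : R), ∃ s ∈ A (1 : G), z = (a * s) ⊗ₜ[k] b - a ⊗ₜ[k] (s * b)} := by
  classical
  set N : Submodule k (R ⊗[k] R) := Submodule.span k {z : R ⊗[k] R |
    ∃ (a b : R), ∃ s ∈ A (1 : G), z = (a * s) ⊗ₜ[k] b - a ⊗ₜ[k] (s * b)} with hNdef
  have hone : ∀ g : G, (1 : R) ∈ A g⁻¹ * A g := by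
    intro g; rw [hS, inv_mul_cancel]; exact one_mem_one A hA
  choose n c d hc hd hcd using fun g => exists_rep A hA (hone g)
  let T : G → R →ₗ[k] ((R ⊗[k] R) ⧸ N) := fun g =>
    N.mkQ ∘ₗ ∑ i : Fin (n g),
      (TensorProduct.mk k R R).flip (d g i) ∘ₗ LinearMap.mulRight k (c g i)
  let γ : R ⊗[k] MonoidAlgebra k G →ₗ[k] ((R ⊗[k] R) ⧸ N) := TensorProduct.lift
    ((Finsupp.lsum k fun g =>
      LinearMap.toSpanSingleton k (R →ₗ[k] ((R ⊗[k] R) ⧸ N)) (T g)) ∘ₗ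
        (MonoidAlgebra.coeffLinearEquiv k (S := k) (M := G)).toLinearMap).flip
  have hγ : ∀ (x : R) (h : G),
      γ (x ⊗ₜ[k] MonoidAlgebra.single h (1 : k)) = T h x := by
    intro x h
    simp only [γ, TensorProduct.lift.tmul, LinearMap.flip_apply, LinearMap.coe_comp,
      Function.comp_apply, LinearEquiv.coe_coe, MonoidAlgebra.coeffLinearEquiv_apply,
      MonoidAlgebra.coeff_single]
    erw [Finsupp.lsum_single]
    simp [LinearMap.toSpanSingleton_apply]
  have hTq : ∀ (h : G) (x : R),
      T h x = N.mkQ (∑ i, (x * c h i) ⊗ₜ[k] d h i) := by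
    intro h x
    simp [T, LinearMap.sum_apply, map_sum]
  have hq : ∀ x : R ⊗[k] R, γ (canonicalMapKG k R G A x) = N.mkQ x := by
    intro x
    induction x using TensorProduct.induction_on with
    | zero => simp
    | add u v hu hv => rw [map_add, map_add, hu, hv, map_add]
    | tmul a b =>
      have key : ∀ b : R, γ (canonicalMapKG k R G A (a ⊗ₜ[k] b)) =
          N.mkQ (a ⊗ₜ[k] b) := by
        refine DirectSum.Decomposition.inductionOn A ?_ ?_ ?_
        · rw [TensorProduct.tmul_zero, map_zero, map_zero, map_zero]
        · intro h m
          obtain ⟨m, hm⟩ := m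
          rw [canon_tmul_of_mem A hm, hγ, hTq]
          have hterm : ∀ i, N.mkQ ((a * m * c h i) ⊗ₜ[k] d h i) =
              N.mkQ (a ⊗ₜ[k] (m * c h i * d h i)) := by
            intro i
            rw [← sub_eq_zero, ← map_sub, Submodule.mkQ_apply,
              Submodule.Quotient.mk_eq_zero]
            apply Submodule.subset_span
            refine ⟨a, d h i, m * c h i, ?_, ?_⟩
            · have := hA h h⁻¹ (Submodule.mul_mem_mul hm (hc h i))
              rwa [mul_inv_cancel] at this
            · rw [mul_assoc]
          rw [map_sum, Finset.sum_congr rfl fun i _ => hterm i, ← map_sum,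
            ← TensorProduct.tmul_sum]
          have : ∑ i, m * c h i * d h i = m := by
            simp_rw [mul_assoc, ← Finset.mul_sum, hcd, mul_one]
          rw [this]
        · intro x y hx hy
          rw [TensorProduct.tmul_add, map_add, map_add, hx, hy, map_add]
      exact key b
  intro x hx
  have h0 : N.mkQ x = 0 := by
    rw [← hq x, LinearMap.mem_ker.mp hx, map_zero]
  rw [hNdef] at h0 ⊢
  exact (Submodule.Quotient.mk_eq_zero _).mp (by rwa [Submodule.mkQ_apply] at h0)

theorem surj (hS : ∀ g h : G, A g * A h = A (g * h)) :
    Function.Surjective (canonicalMapKG k R G A) := by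
  have hone : ∀ g : G, (1 : R) ∈ A g⁻¹ * A g := by
    intro g; rw [hS, inv_mul_cancel]; exact one_mem_one A hA
  have key : ∀ (g : G) (r x : R), x ∈ A g⁻¹ * A g →
      (r * x) ⊗ₜ[k] (MonoidAlgebra.single g 1 : MonoidAlgebra k G) ∈
        LinearMap.range (canonicalMapKG k R G A) := by
    intro g r x hx
    refine Submodule.mul_induction_on
      (C := fun x => (r * x) ⊗ₜ[k] (MonoidAlgebra.single g 1 : MonoidAlgebra k G) ∈
        LinearMap.range (canonicalMapKG k R G A)) hx ?_ ?_
    · intro m hm nn hn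
      exact ⟨(r * m) ⊗ₜ[k] nn, by rw [canon_tmul_of_mem A hn, mul_assoc]⟩
    · intro x y hx hy
      rw [mul_add, TensorProduct.add_tmul]
      exact add_mem hx hy
  have hmem : ∀ (g : G) (r : R),
      r ⊗ₜ[k] (MonoidAlgebra.single g 1 : MonoidAlgebra k G) ∈
        LinearMap.range (canonicalMapKG k R G A) := by
    intro g r
    have := key g r 1 (hone g)
    rwa [mul_one] at this
  rw [← LinearMap.range_eq_top, eq_top_iff]
  rintro z -
  induction z using TensorProduct.induction_on with
  | zero => exact zero_mem _
  | add u v hu hv => exact add_mem hu hv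
  | tmul r f =>
    induction f using MonoidAlgebra.induction with
    | zero => rw [TensorProduct.tmul_zero]; exact zero_mem _
    | single_add g cc f hg hcc ih =>
      rw [TensorProduct.tmul_add]
      refine add_mem ?_ ih
      have : (MonoidAlgebra.single g cc : MonoidAlgebra k G) =
          cc • MonoidAlgebra.single g 1 := by
        rw [MonoidAlgebra.smul_single', mul_one]
      rw [this, TensorProduct.tmul_smul]
      exact Submodule.smul_mem _ _ (hmem g r)

theorem strongly_of_surj (hsurj : Function.Surjective (canonicalMapKG k R G A)) :
    ∀ g h : G, A g * A h = A (g * h) := by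
  have hone : ∀ g : G, (1 : R) ∈ A g⁻¹ * A g := by
    intro g
    obtain ⟨x, hx⟩ := hsurj ((1 : R) ⊗ₜ[k] MonoidAlgebra.single g 1)
    let π : R ⊗[k] MonoidAlgebra k G →ₗ[k] R := TensorProduct.lift
      ((LinearMap.toSpanSingleton k (R →ₗ[k] R) LinearMap.id ∘ₗ
        (Finsupp.lapply g ∘ₗ (MonoidAlgebra.coeffLinearEquiv k (S := k) (M := G)).toLinearMap :
          MonoidAlgebra k G →ₗ[k] k)).flip)
    have hπ : ∀ (x : R) (h : G),
        π (x ⊗ₜ[k] (MonoidAlgebra.single h 1 : MonoidAlgebra k G)) =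
          if h = g then x else 0 := by
      intro x h
      simp only [π, TensorProduct.lift.tmul, LinearMap.flip_apply,
        LinearMap.coe_comp, Function.comp_apply, LinearEquiv.coe_coe,
        MonoidAlgebra.coeffLinearEquiv_apply, MonoidAlgebra.coeff_single]
      erw [Finsupp.lapply_apply]
      rw [Finsupp.single_apply]
      split <;> simp [LinearMap.toSpanSingleton_apply]
    have claim : ∀ y : R ⊗[k] R,
        projA A 1 (π (canonicalMapKG k R G A y)) ∈ A g⁻¹ * A g := by
      intro y
      induction y using TensorProduct.induction_on with
      | zero => rw [map_zero, map_zero, map_zero]; exact zero_mem _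
      | add u v hu hv => rw [map_add, map_add, map_add]; exact add_mem hu hv
      | tmul a b =>
        have key : ∀ b : R,
            projA A 1 (π (canonicalMapKG k R G A (a ⊗ₜ[k] b))) ∈ A g⁻¹ * A g := by
          refine DirectSum.Decomposition.inductionOn A ?_ ?_ ?_
          · rw [TensorProduct.tmul_zero, map_zero, map_zero, map_zero]
            exact zero_mem _
          · intro h m
            rw [canon_tmul_of_mem A (SetLike.coe_mem m), hπ]
            by_cases hh : h = g
            · subst hh
              rw [if_pos rfl, projA_apply,
                decompose_mul_of_right_mem A hA (SetLike.coe_mem m)]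
              exact Submodule.mul_mem_mul (SetLike.coe_mem _) (SetLike.coe_mem m)
            · rw [if_neg hh, map_zero]; exact zero_mem _
          · intro x y hx hy
            rw [TensorProduct.tmul_add, map_add, map_add, map_add]
            exact add_mem hx hy
        exact key b
    have := claim x
    rw [hx, hπ, if_pos rfl, projA_apply,
      DirectSum.decompose_of_mem_same A (one_mem_one A hA)] at this
    exact this
  intro g h
  refine le_antisymm (hA g h) ?_
  intro r hr
  have h1 : (1 : R) ∈ A g * A g⁻¹ := by simpa using hone g⁻¹
  have h2 : r ∈ A g * A g⁻¹ * A (g * h) := by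
    simpa using Submodule.mul_mem_mul h1 hr
  rw [mul_assoc] at h2
  have h3 : A g⁻¹ * A (g * h) ≤ A h := by
    have := hA g⁻¹ (g * h); rwa [inv_mul_cancel_left] at this
  exact mul_le_mul' le_rfl h3 h2

end HGaux

/-- Let `H = kG` be the group Hopf algebra of `G` and `A` a `G`-graded algebra with
its canonical `kG`-comodule algebra structure `δ(a) = a ⊗ g` for `a ∈ A_g`.  The
extension `A_e = A^{co H} ⊆ A` is Hopf–Galois — i.e. the canonical map
`A ⊗_{A_e} A → A ⊗ H`, `a ⊗ b ↦ (a ⊗ 1)δ(b)`, is bijective, where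
`A ⊗_{A_e} A` is the quotient of `A ⊗_k A` by the balancing submodule generated
by `(a·s) ⊗ b - a ⊗ (s·b)`, `s ∈ A_e` — if and only if `A` is strongly
`G`-graded. -/
theorem hopf_galois_iff_strongly_graded
    (hA : ∀ g h : G, A g * A h ≤ A (g * h)) :
    (Function.Surjective (canonicalMapKG k R G A) ∧
      LinearMap.ker (canonicalMapKG k R G A) =
        Submodule.span k {z : R ⊗[k] R |
          ∃ (a b : R), ∃ s ∈ A (1 : G), z = (a * s) ⊗ₜ[k] b - a ⊗ₜ[k] (s * b)}) ↔
    (∀ g h : G, A g * A h = A (g * h)) := by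
  constructor
  · rintro ⟨hsurj, -⟩
    exact HGaux.strongly_of_surj A hA hsurj
  · intro hS
    exact ⟨HGaux.surj A hA hS,
      le_antisymm (HGaux.ker_le_span A hA hS) (HGaux.span_le_ker A hA)⟩

end
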